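/- arXiv:1902.02913 — 10 statements merged into one kernel-verified Lean document; each statement's English description precedes it below -/
import Mathlib

section
/- Let G be a group of ordered type with respect to 𝒟, with a level function lv. Let A, B ∈ 𝒟 with lv(A) = γ and lv(B) = δ, and suppose A ∪ B ∉ 𝒟. Then A ∪ B has level min{γ, δ}; that is, the set {lv(D) : D ∈ 𝒟, D ⊆ A ∪ B} has a minimum and this minimum equals min{γ, δ}. -/
open Pointwise

/-- A collection `𝒟` of subsets is of *ordered type* if the intersection of any two
members is either one of them or empty. -/
def IsOrderedType {G : Type*} (𝒟 : Set (Set G)) : Prop :=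
  ∀ D₁ ∈ 𝒟, ∀ D₂ ∈ 𝒟, D₁ ∩ D₂ = D₁ ∨ D₁ ∩ D₂ = D₂ ∨ D₁ ∩ D₂ = ∅

/-- If `G` is of ordered type with respect to `𝒟` and `A, B ∈ 𝒟` have levels `γ, δ`
respectively, and `A ∪ B ∉ 𝒟`, then `A ∪ B` has level `min γ δ`. -/
theorem union_of_two_distinguished_has_level_min
    {G : Type*} [Group G] {Γ : Type*} [LinearOrder Γ]
    (𝒟 : Set (Set G)) (lv : Set G → Γ)
    (h𝒟ne : ∀ D ∈ 𝒟, (D : Set G).Nonempty)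
    (h𝒟tr : ∀ (g : G), ∀ D ∈ 𝒟, g • D ∈ 𝒟)
    (hot : IsOrderedType 𝒟)
    (hlv_inv : ∀ (g : G), ∀ D ∈ 𝒟, lv (g • D) = lv D)
    (hlv_mono : ∀ D' ∈ 𝒟, ∀ D ∈ 𝒟, D' ⊆ D → lv D ≤ lv D')
    {A B : Set G} (hA : A ∈ 𝒟) (hB : B ∈ 𝒟)
    {γ δ : Γ} (hγ : lv A = γ) (hδ : lv B = δ)
    (hAB : A ∪ B ∉ 𝒟) :
    IsLeast {ε | ∃ D ∈ 𝒟, D ⊆ A ∪ B ∧ lv D = ε} (min γ δ) := by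
  constructor
  · rcases le_total γ δ with h | h
    · exact ⟨A, hA, Set.subset_union_left, by rw [hγ, min_eq_left h]⟩
    · exact ⟨B, hB, Set.subset_union_right, by rw [hδ, min_eq_right h]⟩
  · rintro ε ⟨D, hD, hsub, rfl⟩
    -- Show D ⊆ A or D ⊆ B
    have key : D ⊆ A ∨ D ⊆ B := by
      rcases hot D hD A hA with h1 | h1 | h1
      · exact Or.inl (by rw [← h1]; exact Set.inter_subset_right)
      · rcases hot D hD B hB with h2 | h2 | h2
        · exact Or.inr (by rw [← h2]; exact Set.inter_subset_right)
        · exfalso; apply hAB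
          have : D = A ∪ B := by
            apply Set.Subset.antisymm hsub
            apply Set.union_subset
            · rw [← h1]; exact Set.inter_subset_left
            · rw [← h2]; exact Set.inter_subset_left
          rwa [← this]
        · -- D ∩ B = ∅, D ∩ A = A : then D ⊆ A since D ⊆ A ∪ B and D ∩ B = ∅
          left
          intro x hx
          rcases hsub hx with hxa | hxb
          · exact hxa
          · exact absurd (Set.mem_inter hx hxb) (by rw [h2]; exact Set.notMem_empty x)
      · -- D ∩ A = ∅
        right
        intro x hx
        rcases hsub hx with hxa | hxb
        · exact absurd (Set.mem_inter hx hxa) (by rw [h1]; exact Set.notMem_empty x)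
        · exact hxb
    rcases key with h | h
    · exact le_trans (min_le_left γ δ) (hγ ▸ hlv_mono D hD A hA h)
    · exact le_trans (min_le_right γ δ) (hδ ▸ hlv_mono D hD B hB h)
end

section
/- Let G be a group of ordered type with respect to 𝒟, with a level function lv. Let A₁, …, A_r ∈ 𝒟 be finitely many distinguished sets such that for every subset S ⊆ {1, …, r} with at least two elements the union ⋃_{i∈S} A_i does not belong to 𝒟. Then A = A₁ ∪ ⋯ ∪ A_r has level min{lv(A₁), …, lv(A_r)}; that is, the set {lv(D) : D ∈ 𝒟, D ⊆ A} has a minimum equal to min_i lv(A_i). -/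
open Pointwise

/-- If `G` is of ordered type with respect to `𝒟` and `A₁, …, A_r ∈ 𝒟` are such that no
union of a subcollection of at least two of them belongs to `𝒟`, then `A₁ ∪ ⋯ ∪ A_r` has
level `min_i lv(A_i)`. -/
theorem union_of_distinguished_has_level_min
    {G : Type*} [Group G] {Γ : Type*} [LinearOrder Γ]
    (𝒟 : Set (Set G)) (lv : Set G → Γ)
    (h𝒟ne : ∀ D ∈ 𝒟, (D : Set G).Nonempty)
    (h𝒟tr : ∀ (g : G), ∀ D ∈ 𝒟, g • D ∈ 𝒟)
    (hot : IsOrderedType 𝒟)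
    (hlv_inv : ∀ (g : G), ∀ D ∈ 𝒟, lv (g • D) = lv D)
    (hlv_mono : ∀ D' ∈ 𝒟, ∀ D ∈ 𝒟, D' ⊆ D → lv D ≤ lv D')
    {r : ℕ} (hr : r ≠ 0) (A : Fin r → Set G) (hA : ∀ i, A i ∈ 𝒟)
    (hsub : ∀ S : Finset (Fin r), 2 ≤ S.card → (⋃ i ∈ S, A i) ∉ 𝒟) :
    IsLeast {ε | ∃ D ∈ 𝒟, D ⊆ (⋃ i, A i) ∧ lv D = ε}
      (Finset.univ.inf' (Finset.univ_nonempty_iff.mpr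
        (Fin.pos_iff_nonempty.mp (Nat.pos_of_ne_zero hr))) (fun i => lv (A i))) := by
  constructor
  · obtain ⟨i, -, hi⟩ := Finset.exists_mem_eq_inf' (Finset.univ_nonempty_iff.mpr
      (Fin.pos_iff_nonempty.mp (Nat.pos_of_ne_zero hr))) (fun i => lv (A i))
    exact ⟨A i, hA i, Set.subset_iUnion A i, hi.symm⟩
  · rintro ε ⟨D, hD, hDsub, rfl⟩
    have key : ∃ i, D ⊆ A i := by
      by_cases h : ∃ i, D ∩ A i = D
      · obtain ⟨i, hi⟩ := h
        exact ⟨i, Set.inter_eq_left.mp hi⟩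
      push_neg at h
      classical
      set S : Finset (Fin r) := Finset.univ.filter (fun i => (D ∩ A i).Nonempty) with hS
      have hsubA : ∀ i ∈ S, A i ⊆ D := by
        intro i hi
        rcases hot D hD (A i) (hA i) with h1 | h2 | h3
        · exact absurd h1 (h i)
        · exact h2 ▸ Set.inter_subset_left
        · simp only [hS, Finset.mem_filter] at hi
          exact absurd h3 hi.2.ne_empty
      have hDeq : D = ⋃ i ∈ S, A i := by
        apply Set.Subset.antisymm
        · intro x hx
          obtain ⟨i, hxi⟩ := Set.mem_iUnion.mp (hDsub hx)
          have : i ∈ S := by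
            simp only [hS, Finset.mem_filter]
            exact ⟨Finset.mem_univ i, ⟨x, hx, hxi⟩⟩
          exact Set.mem_biUnion this hxi
        · exact Set.iUnion₂_subset hsubA
      have hSne : S.Nonempty := by
        obtain ⟨x, hx⟩ := h𝒟ne D hD
        obtain ⟨i, hxi⟩ := Set.mem_iUnion.mp (hDsub hx)
        exact ⟨i, by simp only [hS, Finset.mem_filter]; exact ⟨Finset.mem_univ i, ⟨x, hx, hxi⟩⟩⟩
      have hcard : S.card = 1 := by
        rcases Nat.lt_or_ge S.card 2 with hlt | hge
        · interval_cases h : S.card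
          · exact absurd (Finset.card_eq_zero.mp h) (Finset.nonempty_iff_ne_empty.mp hSne)
          · rfl
        · exact absurd (hDeq ▸ hD) (hsub S hge)
      obtain ⟨i, hi⟩ := Finset.card_eq_one.mp hcard
      refine ⟨i, ?_⟩
      rw [hDeq, hi]
      simp
    obtain ⟨i, hi⟩ := key
    exact le_trans (Finset.inf'_le _ (Finset.mem_univ i)) (hlv_mono D hD (A i) (hA i) hi)
end

section
/- Let G be a group of ordered type with respect to 𝒟, with a level function lv. If A₁, …, A_r ∈ 𝒟 are finitely many distinguished sets, then A = A₁ ∪ ⋯ ∪ A_r has a level; that is, the set {lv(D) : D ∈ 𝒟, D ⊆ A} has a minimum. -/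
open Pointwise

/-- If `G` is of ordered type with respect to `𝒟` then any union of finitely many
distinguished sets has a level. -/
theorem union_of_distinguished_has_level
    {G : Type*} [Group G] {Γ : Type*} [LinearOrder Γ]
    (𝒟 : Set (Set G)) (lv : Set G → Γ)
    (h𝒟ne : ∀ D ∈ 𝒟, (D : Set G).Nonempty)
    (h𝒟tr : ∀ (g : G), ∀ D ∈ 𝒟, g • D ∈ 𝒟)
    (hot : IsOrderedType 𝒟)
    (hlv_inv : ∀ (g : G), ∀ D ∈ 𝒟, lv (g • D) = lv D)
    (hlv_mono : ∀ D' ∈ 𝒟, ∀ D ∈ 𝒟, D' ⊆ D → lv D ≤ lv D')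
    {r : ℕ} (hr : r ≠ 0) (A : Fin r → Set G) (hA : ∀ i, A i ∈ 𝒟) :
    ∃ γ : Γ, IsLeast {ε | ∃ D ∈ 𝒟, D ⊆ (⋃ i, A i) ∧ lv D = ε} γ := by
  haveI : NeZero r := ⟨hr⟩
  -- candidate sets: unions of subfamilies of A that are in 𝒟
  set 𝒞 : Set (Set G) := {U | U ∈ 𝒟 ∧ ∃ S : Set (Fin r), U = ⋃ i ∈ S, A i} with h𝒞
  have h𝒞fin : 𝒞.Finite := by
    have : 𝒞 ⊆ (fun S : Set (Fin r) => ⋃ i ∈ S, A i) '' Set.univ := by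
      rintro U ⟨-, S, rfl⟩
      exact ⟨S, trivial, rfl⟩
    exact (Set.Finite.image _ Set.finite_univ).subset this
  -- its image under lv
  have hAin : ∀ i, A i ∈ 𝒞 := fun i =>
    ⟨hA i, {i}, by simp⟩
  obtain ⟨U, hU𝒞, hγle⟩ := Set.exists_min_image 𝒞 lv h𝒞fin ⟨A 0, hAin 0⟩
  refine ⟨lv U, ?_, ?_⟩
  · obtain ⟨hU𝒟, S, rfl⟩ := hU𝒞
    exact ⟨_, hU𝒟, Set.iUnion₂_subset fun i _ => Set.subset_iUnion A i, rfl⟩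
  · rintro ε ⟨D, hD𝒟, hDsub, rfl⟩
    by_cases hc : ∃ i, D ⊆ A i
    · obtain ⟨i, hi⟩ := hc
      exact le_trans (hγle _ (hAin i)) (hlv_mono D hD𝒟 (A i) (hA i) hi)
    · push_neg at hc
      -- then D is the union of the A i it contains
      have hDeq : D = ⋃ i ∈ {i | A i ⊆ D}, A i := by
        apply Set.Subset.antisymm
        · intro x hx
          obtain ⟨i, hxi⟩ := Set.mem_iUnion.mp (hDsub hx)
          rcases hot D hD𝒟 (A i) (hA i) with h | h | h
          · exact absurd (fun y hy => (h ▸ Set.inter_subset_right :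
              D ⊆ A i) hy) (hc i)
          · have hAiD : A i ⊆ D := h ▸ Set.inter_subset_left
            exact Set.mem_biUnion hAiD hxi
          · exact absurd (Set.mem_inter hx hxi) (h ▸ Set.notMem_empty x)
        · exact Set.iUnion₂_subset fun i hi => hi
      exact hγle D ⟨hD𝒟, {i | A i ⊆ D}, hDeq⟩
end

section
/- Let G be a group of ordered type with respect to 𝒟, and equip G with a topology having 𝒟 as a basis. If this topology is Hausdorff, then every member of 𝒟 is a closed subset of G. -/
open Pointwise

/-- If `G` is of ordered type with respect to `𝒟`, and `G` carries a Hausdorff topology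
having `𝒟` as a basis, then every distinguished set is closed. -/
theorem distinguished_isClosed_of_orderedType
    {G : Type*} [Group G] [TopologicalSpace G] [T2Space G]
    (𝒟 : Set (Set G))
    (h𝒟ne : ∀ D ∈ 𝒟, (D : Set G).Nonempty)
    (h𝒟tr : ∀ (g : G), ∀ D ∈ 𝒟, g • D ∈ 𝒟)
    (hbasis : TopologicalSpace.IsTopologicalBasis 𝒟)
    (hot : IsOrderedType 𝒟) :
    ∀ D ∈ 𝒟, IsClosed D := by
  intro D hD
  rw [← isOpen_compl_iff, hbasis.isOpen_iff]
  intro x hx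
  obtain ⟨y, hy⟩ := h𝒟ne D hD
  have hxy : x ≠ y := fun h => hx (h ▸ hy)
  obtain ⟨U, V, hU, hV, hxU, hyV, hUV⟩ := t2_separation hxy
  obtain ⟨B, hB, hxB, hBU⟩ := hbasis.exists_subset_of_mem_open hxU hU
  refine ⟨B, hB, hxB, ?_⟩
  rcases hot B hB D hD with h | h | h
  · have : x ∈ B ∩ D := h.symm ▸ hxB
    exact absurd this.2 hx
  · have hyB : y ∈ B := ((h.symm ▸ hy : y ∈ B ∩ D)).1
    exact absurd hyV (Set.disjoint_left.mp hUV (hBU hyB))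
  · intro z hz hzD
    exact absurd (h ▸ (⟨hz, hzD⟩ : z ∈ B ∩ D)) (Set.notMem_empty z)
end

section
/- Let G be a group, let ℒ be a collection of subgroups of G, and let 𝒟 = {gH : g ∈ G, H ∈ ℒ} be the family of their left cosets. Suppose G is of ordered type with respect to 𝒟, lv is a level function on 𝒟, and G carries a Hausdorff topology having 𝒟 as a basis. Let A ∈ 𝒟 with lv(A) = γ and let B ∈ 𝒟 with B ⊆ A and lv(B) = δ > γ. Then A \ B contains a member of 𝒟 of level exactly δ, and every member of 𝒟 contained in A \ B has level ≥ γ; consequently if A \ B has a level then γ ≤ lv(A \ B) ≤ δ. -/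
open Pointwise

/-- Suppose the distinguished sets of `G` are the left cosets of a family `ℒ` of
subgroups, `G` is Hausdorff and of ordered type, `A` is distinguished of level `γ` and
`B ⊆ A` is distinguished of level `δ > γ`.  Then `A \ B` contains a distinguished set
of level exactly `δ`, every distinguished subset of `A \ B` has level `≥ γ`, and hence
if `A \ B` has a level `ε` then `γ ≤ ε ≤ δ`. -/
theorem level_of_difference_between
    {G : Type*} [Group G] [TopologicalSpace G] [T2Space G]
    {Γ : Type*} [LinearOrder Γ]
    (ℒ : Set (Subgroup G)) (𝒟 : Set (Set G))
    (h𝒟 : 𝒟 = {D | ∃ g : G, ∃ H ∈ ℒ, D = g • (H : Set G)})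
    (lv : Set G → Γ)
    (hbasis : TopologicalSpace.IsTopologicalBasis 𝒟)
    (hot : IsOrderedType 𝒟)
    (hlv_inv : ∀ (g : G), ∀ D ∈ 𝒟, lv (g • D) = lv D)
    (hlv_mono : ∀ D' ∈ 𝒟, ∀ D ∈ 𝒟, D' ⊆ D → lv D ≤ lv D')
    {A B : Set G} (hA : A ∈ 𝒟) (hB : B ∈ 𝒟) (hBA : B ⊆ A)
    {γ δ : Γ} (hγ : lv A = γ) (hδ : lv B = δ) (hγδ : γ < δ) :
    (∃ D ∈ 𝒟, D ⊆ A \ B ∧ lv D = δ) ∧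
    (∀ D ∈ 𝒟, D ⊆ A \ B → γ ≤ lv D) ∧
    (∀ ε : Γ, IsLeast {ε' | ∃ D ∈ 𝒟, D ⊆ A \ B ∧ lv D = ε'} ε → γ ≤ ε ∧ ε ≤ δ) := by

  subst h𝒟
  obtain ⟨a, HA, hHA, rfl⟩ := hA
  obtain ⟨b, HB, hHB, rfl⟩ := hB
  -- A \ B is nonempty
  have hBneA : ¬ (a • (HA : Set G) ⊆ b • (HB : Set G)) := by
    intro hsub
    have : (b • (HB : Set G)) = a • (HA : Set G) := le_antisymm hBA hsub
    rw [this, hγ] at hδ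
    exact absurd (hδ ▸ hγδ) (lt_irrefl _)
  obtain ⟨x, hxA, hxB⟩ : ∃ x, x ∈ a • (HA : Set G) ∧ x ∉ b • (HB : Set G) := by
    by_contra h
    push_neg at h
    exact hBneA h
  -- b ∈ A
  have hbA : b ∈ a • (HA : Set G) := hBA ⟨1, HB.one_mem, mul_one b⟩
  have hmemA : ∀ y : G, y ∈ a • (HA : Set G) ↔ a⁻¹ * y ∈ HA := fun y =>
    Set.mem_smul_set_iff_inv_smul_mem
  have hmemB : ∀ y : G, y ∈ b • (HB : Set G) ↔ b⁻¹ * y ∈ HB := fun y =>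
    Set.mem_smul_set_iff_inv_smul_mem
  have hbHA : a⁻¹ * b ∈ HA := (hmemA b).1 hbA
  -- HB ⊆ HA
  have hHBA : (HB : Set G) ⊆ (HA : Set G) := by
    intro h hh
    have h1 : b * h ∈ b • (HB : Set G) := ⟨h, hh, rfl⟩
    have h2 : a⁻¹ * (b * h) ∈ HA := (hmemA _).1 (hBA h1)
    have : (a⁻¹ * b)⁻¹ * (a⁻¹ * (b * h)) ∈ HA := HA.mul_mem (HA.inv_mem hbHA) h2
    simpa [mul_assoc] using this
  -- the candidate set
  have hD𝒟 : x • (HB : Set G) ∈ {D | ∃ g : G, ∃ H ∈ ℒ, D = g • (H : Set G)} :=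
    ⟨x, HB, hHB, rfl⟩
  have hxHA : a⁻¹ * x ∈ HA := (hmemA x).1 hxA
  have hDsub : x • (HB : Set G) ⊆ a • (HA : Set G) \ b • (HB : Set G) := by
    rintro z ⟨h, hh, rfl⟩
    constructor
    · refine (hmemA _).2 ?_
      have : (a⁻¹ * x) * h ∈ HA := HA.mul_mem hxHA (hHBA hh)
      simpa [mul_assoc] using this
    · intro hz
      apply hxB
      have hz' : b⁻¹ * (x * h) ∈ HB := (hmemB _).1 hz
      refine (hmemB x).2 ?_
      have : (b⁻¹ * (x * h)) * h⁻¹ ∈ HB := HB.mul_mem hz' (HB.inv_mem hh)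
      simpa [mul_assoc] using this
  have hlvD : lv (x • (HB : Set G)) = δ := by
    have : x • (HB : Set G) = (x * b⁻¹) • (b • (HB : Set G)) := by
      rw [smul_smul]; simp
    rw [this, hlv_inv _ _ ⟨b, HB, hHB, rfl⟩, hδ]
  have hlow : ∀ D ∈ {D | ∃ g : G, ∃ H ∈ ℒ, D = g • (H : Set G)},
      D ⊆ a • (HA : Set G) \ b • (HB : Set G) → γ ≤ lv D := by
    intro D hD hsub
    have : D ⊆ a • (HA : Set G) := hsub.trans Set.diff_subset
    have := hlv_mono D hD _ ⟨a, HA, hHA, rfl⟩ this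
    exact hγ ▸ this
  refine ⟨⟨x • (HB : Set G), hD𝒟, hDsub, hlvD⟩, hlow, ?_⟩
  intro ε hε
  obtain ⟨⟨D, hD, hsub, hlvε⟩, hlb⟩ := hε
  exact ⟨hlvε ▸ hlow D hD hsub, hlb ⟨x • (HB : Set G), hD𝒟, hDsub, hlvD⟩⟩
end

section
/- Let G be a group of ordered type with respect to 𝒟, with a level function lv, and equip G with a Hausdorff topology having 𝒟 as a basis. For 1 ≤ i ≤ r let A_i ∈ 𝒟 and let B_1, …, B_s be members of 𝒟 or empty, with each B_j contained in A_i for some i. Set C_i = A_i \ (B_1 ∪ ⋯ ∪ B_s) and suppose the sets C_i are pairwise disjoint and that no union of any nonempty subcollection of the C_i belongs to 𝒟. Then every D ∈ 𝒟 with D ⊆ C = C_1 ∪ ⋯ ∪ C_r satisfies lv(D) ≥ min{lv(A_1), …, lv(A_r)}; in particular, if C has a level then its level is at least min_i lv(A_i). -/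
open Pointwise

/-- Let `G` be Hausdorff and of ordered type, `A i ∈ 𝒟`, `B j` distinguished or empty,
each `B j` contained in some `A i`, and let `C i = A i \ ⋃ j, B j` be pairwise disjoint
with no union of a nonempty subcollection of the `C i` distinguished.  Then every
distinguished subset of `C = ⋃ i, C i` has level at least `min_i lv (A i)`; in
particular if `C` has a level then it is at least `min_i lv (A i)`. -/
theorem level_of_ddd_ge
    {G : Type*} [Group G] [TopologicalSpace G] [T2Space G]
    {Γ : Type*} [LinearOrder Γ]
    (𝒟 : Set (Set G)) (lv : Set G → Γ)
    (h𝒟ne : ∀ D ∈ 𝒟, (D : Set G).Nonempty)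
    (h𝒟tr : ∀ (g : G), ∀ D ∈ 𝒟, g • D ∈ 𝒟)
    (hbasis : TopologicalSpace.IsTopologicalBasis 𝒟)
    (hot : IsOrderedType 𝒟)
    (hlv_inv : ∀ (g : G), ∀ D ∈ 𝒟, lv (g • D) = lv D)
    (hlv_mono : ∀ D' ∈ 𝒟, ∀ D ∈ 𝒟, D' ⊆ D → lv D ≤ lv D')
    {r s : ℕ} (hr : r ≠ 0)
    (A : Fin r → Set G) (hA : ∀ i, A i ∈ 𝒟)
    (B : Fin s → Set G) (hB : ∀ j, B j ∈ 𝒟 ∨ B j = ∅)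
    (hBA : ∀ j, ∃ i, B j ⊆ A i)
    (C : Fin r → Set G) (hC : ∀ i, C i = A i \ ⋃ j, B j)
    (hCdisj : Pairwise (Function.onFun Disjoint C))
    (hCnd : ∀ S : Finset (Fin r), S.Nonempty → (⋃ i ∈ S, C i) ∉ 𝒟) :
    (∀ D ∈ 𝒟, D ⊆ (⋃ i, C i) →
      Finset.univ.inf' (Finset.univ_nonempty_iff.mpr
        (Fin.pos_iff_nonempty.mp (Nat.pos_of_ne_zero hr))) (fun i => lv (A i)) ≤ lv D) ∧
    (∀ ε : Γ, IsLeast {ε' | ∃ D ∈ 𝒟, D ⊆ (⋃ i, C i) ∧ lv D = ε'} ε →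
      Finset.univ.inf' (Finset.univ_nonempty_iff.mpr
        (Fin.pos_iff_nonempty.mp (Nat.pos_of_ne_zero hr))) (fun i => lv (A i)) ≤ ε) := by

  classical
  have key : ∀ D ∈ 𝒟, D ⊆ (⋃ i, C i) →
      Finset.univ.inf' (Finset.univ_nonempty_iff.mpr
        (Fin.pos_iff_nonempty.mp (Nat.pos_of_ne_zero hr))) (fun i => lv (A i)) ≤ lv D := by
    intro D hD hDC
    by_cases h : ∃ i, D ⊆ A i
    · obtain ⟨i, hi⟩ := h
      exact le_trans (Finset.inf'_le _ (Finset.mem_univ i)) (hlv_mono D hD (A i) (hA i) hi)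
    · push_neg at h
      exfalso
      have hsub : ∀ i, (D ∩ A i).Nonempty → A i ⊆ D := by
        intro i hne
        rcases hot D hD (A i) (hA i) with h1 | h1 | h1
        · exact absurd (h1 ▸ Set.inter_subset_right : D ⊆ A i) (h i)
        · exact h1 ▸ Set.inter_subset_left
        · rw [h1] at hne; exact absurd hne (by simp)
      set S : Finset (Fin r) := Finset.univ.filter (fun i => A i ⊆ D) with hSdef
      obtain ⟨x, hx⟩ := h𝒟ne D hD
      obtain ⟨i₀, hi₀⟩ := Set.mem_iUnion.mp (hDC hx)
      have hxA : x ∈ A i₀ := ((hC i₀ ▸ hi₀ : x ∈ A i₀ \ ⋃ j, B j)).1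
      have hS : S.Nonempty := ⟨i₀, by
        simp only [hSdef, Finset.mem_filter, Finset.mem_univ, true_and]
        exact hsub i₀ ⟨x, hx, hxA⟩⟩
      apply hCnd S hS
      have heq : (⋃ i ∈ S, C i) = D := by
        apply Set.Subset.antisymm
        · intro y hy
          simp only [hSdef, Set.mem_iUnion, Finset.mem_filter, Finset.mem_univ, true_and] at hy
          obtain ⟨i, hi, hyi⟩ := hy
          exact hi ((hC i ▸ hyi : y ∈ A i \ ⋃ j, B j)).1
        · intro y hy
          obtain ⟨j, hj⟩ := Set.mem_iUnion.mp (hDC hy)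
          have hjA : A j ⊆ D := hsub j ⟨y, hy, ((hC j ▸ hj : y ∈ A j \ ⋃ k, B k)).1⟩
          exact Set.mem_biUnion (Finset.mem_filter.mpr ⟨Finset.mem_univ j, hjA⟩) hj
      rw [heq]; exact hD
  refine ⟨key, ?_⟩
  intro ε hε
  obtain ⟨D, hD, hDC, hlvD⟩ := hε.1
  exact hlvD ▸ key D hD hDC
end

section
/- Let G be a group of ordered type with respect to 𝒟, with a level function lv, and equip G with a Hausdorff topology having 𝒟 as a basis. Then for every set C in the ring of ddd-sets of G, the set of levels {lv(D) : D ∈ 𝒟, D ⊆ C} is bounded below in Γ (i.e. no ddd-set contains distinguished subsets of arbitrarily low level; equivalently, every ddd-set either has a level or is of type E). -/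
open Pointwise

/-- The ring of ddd-sets generated by the distinguished sets `𝒟`: the smallest
collection of subsets containing `𝒟` and the empty set and closed under finite unions,
finite intersections and set differences. -/
inductive IsDDD {G : Type*} (𝒟 : Set (Set G)) : Set G → Prop
  | base {D : Set G} : D ∈ 𝒟 → IsDDD 𝒟 D
  | empty : IsDDD 𝒟 ∅
  | union {A B : Set G} : IsDDD 𝒟 A → IsDDD 𝒟 B → IsDDD 𝒟 (A ∪ B)
  | inter {A B : Set G} : IsDDD 𝒟 A → IsDDD 𝒟 B → IsDDD 𝒟 (A ∩ B)
  | sdiff {A B : Set G} : IsDDD 𝒟 A → IsDDD 𝒟 B → IsDDD 𝒟 (A \ B)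

/-- If `G` is Hausdorff and of ordered type then the set of levels of distinguished
subsets of any ddd-set is bounded below: every ddd-set has a level or is of type `E`. -/
theorem ddd_levels_bddBelow
    {G : Type*} [Group G] [TopologicalSpace G] [T2Space G]
    {Γ : Type*} [LinearOrder Γ] [Nonempty Γ]
    (𝒟 : Set (Set G)) (lv : Set G → Γ)
    (h𝒟ne : ∀ D ∈ 𝒟, (D : Set G).Nonempty)
    (h𝒟tr : ∀ (g : G), ∀ D ∈ 𝒟, g • D ∈ 𝒟)
    (hbasis : TopologicalSpace.IsTopologicalBasis 𝒟)
    (hot : IsOrderedType 𝒟)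
    (hlv_inv : ∀ (g : G), ∀ D ∈ 𝒟, lv (g • D) = lv D)
    (hlv_mono : ∀ D' ∈ 𝒟, ∀ D ∈ 𝒟, D' ⊆ D → lv D ≤ lv D') :
    ∀ C : Set G, IsDDD 𝒟 C → BddBelow {ε | ∃ D ∈ 𝒟, D ⊆ C ∧ lv D = ε} := by
  classical
  have cover : ∀ C : Set G, IsDDD 𝒟 C → ∃ s : Finset (Set G), ↑s ⊆ 𝒟 ∧ C ⊆ ⋃₀ ↑s := by
    intro C hC
    induction hC with
    | @base D hD => exact ⟨{D}, by simpa using hD, by simp⟩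
    | empty => exact ⟨∅, by simp, by simp⟩
    | union hA hB ihA ihB =>
      obtain ⟨s, hs, hAs⟩ := ihA
      obtain ⟨t, ht, hBt⟩ := ihB
      refine ⟨s ∪ t, ?_, ?_⟩
      · intro x hx
        rcases Finset.mem_union.1 hx with h | h
        · exact hs h
        · exact ht h
      · intro x hx
        rcases hx with hx | hx
        · obtain ⟨E, hE, hxE⟩ := hAs hx
          exact ⟨E, Finset.mem_union_left _ hE, hxE⟩
        · obtain ⟨E, hE, hxE⟩ := hBt hx
          exact ⟨E, Finset.mem_union_right _ hE, hxE⟩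
    | inter hA hB ihA ihB =>
      obtain ⟨s, hs, hAs⟩ := ihA
      exact ⟨s, hs, Set.inter_subset_left.trans hAs⟩
    | sdiff hA hB ihA ihB =>
      obtain ⟨s, hs, hAs⟩ := ihA
      exact ⟨s, hs, Set.diff_subset.trans hAs⟩
  intro C hC
  obtain ⟨s, hs𝒟, hCs⟩ := cover C hC
  set F : Finset (Set G) := s ∪ s.powerset.image (fun t : Finset (Set G) => ⋃₀ (↑t : Set (Set G))) with hF
  have hFne : F.Nonempty :=
    ⟨⋃₀ (↑(∅ : Finset (Set G)) : Set (Set G)), Finset.mem_union_right _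
      (Finset.mem_image.2 ⟨∅, Finset.mem_powerset.2 (Finset.empty_subset _), rfl⟩)⟩
  refine ⟨F.inf' hFne lv, ?_⟩
  rintro ε ⟨D, hD𝒟, hDC, rfl⟩
  by_cases h : ∃ E ∈ s, D ⊆ E
  · obtain ⟨E, hEs, hDE⟩ := h
    exact le_trans (Finset.inf'_le _ (Finset.mem_union_left _ hEs))
      (hlv_mono D hD𝒟 E (hs𝒟 hEs) hDE)
  · push_neg at h
    have hDeq : D = ⋃₀ ↑(s.filter (fun E => E ⊆ D)) := by
      apply Set.Subset.antisymm
      · intro x hx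
        obtain ⟨E, hEs, hxE⟩ := hCs (hDC hx)
        have hE𝒟 : E ∈ 𝒟 := hs𝒟 hEs
        rcases hot D hD𝒟 E hE𝒟 with h1 | h2 | h3
        · exact absurd (Set.inter_eq_left.1 h1) (h E hEs)
        · exact Set.mem_sUnion.2 ⟨E, by
            simp only [Finset.coe_filter, Set.mem_setOf_eq]
            exact ⟨hEs, Set.inter_eq_right.1 h2⟩, hxE⟩
        · exact absurd (h3 ▸ Set.mem_inter hx hxE) (Set.notMem_empty x)
      · intro x hx
        obtain ⟨E, hE, hxE⟩ := hx
        simp only [Finset.coe_filter, Set.mem_setOf_eq] at hE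
        exact hE.2 hxE
    have hDF : D ∈ F := by
      rw [hDeq]
      refine Finset.mem_union_right _ ?_
      refine Finset.mem_image.2 ⟨s.filter (fun E => E ⊆ D), ?_, rfl⟩
      exact Finset.mem_powerset.2 (Finset.filter_subset _ _)
    exact Finset.inf'_le _ hDF
end

section
/- Let G be a group of ordered type with respect to 𝒟, and let D₁ ⊆ D₂ ⊆ D₃ with D₁, D₂, D₃ ∈ 𝒟. If D₁ has finite index in D₃, then D₂ has finite index in D₃ and D₁ has finite index in D₂, and moreover |D₃ : D₁| = |D₃ : D₂| · |D₂ : D₁|. -/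
open Pointwise

/-- `D₁` has finite index in `D₂`: finitely many left translates of `D₁` cover `D₂`. -/
def HasFinIndexIn {G : Type*} [Group G] (D₁ D₂ : Set G) : Prop :=
  ∃ T : Finset G, D₂ ⊆ ⋃ g ∈ T, g • D₁

/-- The index `|D₂ : D₁|`: the minimal cardinality of a finite set of left translates
of `D₁` covering `D₂`. -/
noncomputable def indexIn {G : Type*} [Group G] (D₂ D₁ : Set G) : ℕ :=
  sInf {n | ∃ T : Finset G, T.card = n ∧ D₂ ⊆ ⋃ g ∈ T, g • D₁}

private lemma indexIn_le_card {G : Type*} [Group G] {D D' : Set G} {T : Finset G}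
    (h : D ⊆ ⋃ g ∈ T, g • D') : indexIn D D' ≤ T.card :=
  Nat.sInf_le ⟨T, rfl, h⟩

private lemma indexIn_le_card_of_smul_cover {G : Type*} [Group G] {D D' : Set G} {c : G}
    {T : Finset G} (h : c • D ⊆ ⋃ g ∈ T, g • D') : indexIn D D' ≤ T.card := by
  classical
  refine le_trans (indexIn_le_card (T := T.image (fun g => c⁻¹ * g)) ?_)
    Finset.card_image_le
  intro x hx
  have hx' : c • x ∈ ⋃ g ∈ T, g • D' := h (Set.smul_mem_smul_set hx)
  simp only [Set.mem_iUnion] at hx' ⊢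
  obtain ⟨g, hg, hmem⟩ := hx'
  refine ⟨c⁻¹ * g, Finset.mem_image_of_mem _ hg, ?_⟩
  rw [Set.mem_smul_set_iff_inv_smul_mem] at hmem ⊢
  simpa [mul_inv_rev, mul_smul, mul_assoc] using hmem

/-- Multiplicative tower law for indices of distinguished sets in a group of ordered
type: for `D₁ ⊆ D₂ ⊆ D₃` in `𝒟`, if `|D₃ : D₁|` is finite then so are `|D₃ : D₂|` and
`|D₂ : D₁|`, and `|D₃ : D₁| = |D₃ : D₂| ⬝ |D₂ : D₁|`. -/
theorem index_tower_law_of_orderedType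
    {G : Type*} [Group G]
    (𝒟 : Set (Set G))
    (h𝒟ne : ∀ D ∈ 𝒟, (D : Set G).Nonempty)
    (h𝒟tr : ∀ (g : G), ∀ D ∈ 𝒟, g • D ∈ 𝒟)
    (hot : IsOrderedType 𝒟)
    {D₁ D₂ D₃ : Set G} (hD₁ : D₁ ∈ 𝒟) (hD₂ : D₂ ∈ 𝒟) (hD₃ : D₃ ∈ 𝒟)
    (h12 : D₁ ⊆ D₂) (h23 : D₂ ⊆ D₃)
    (hfin : HasFinIndexIn D₁ D₃) :
    HasFinIndexIn D₂ D₃ ∧ HasFinIndexIn D₁ D₂ ∧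
      indexIn D₃ D₁ = indexIn D₃ D₂ * indexIn D₂ D₁ := by
  classical
  obtain ⟨T₀, hT₀⟩ := hfin
  have hfin32 : HasFinIndexIn D₂ D₃ :=
    ⟨T₀, hT₀.trans (Set.iUnion_mono fun g => Set.iUnion_mono fun _ => Set.smul_set_mono h12)⟩
  have hfin21 : HasFinIndexIn D₁ D₂ := ⟨T₀, fun x hx => hT₀ (h23 hx)⟩
  refine ⟨hfin32, hfin21, ?_⟩
  set k := indexIn D₃ D₁ with hk
  set m := indexIn D₃ D₂ with hm
  set n := indexIn D₂ D₁ with hn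
  -- witnesses realizing the three indices
  obtain ⟨T, hTcard, hTcov⟩ :
      ∃ T : Finset G, T.card = k ∧ D₃ ⊆ ⋃ g ∈ T, g • D₁ :=
    Nat.sInf_mem (⟨T₀.card, T₀, rfl, hT₀⟩ :
      Set.Nonempty {n | ∃ T : Finset G, T.card = n ∧ D₃ ⊆ ⋃ g ∈ T, g • D₁})
  obtain ⟨A, hAcard, hAcov⟩ :
      ∃ A : Finset G, A.card = m ∧ D₃ ⊆ ⋃ g ∈ A, g • D₂ :=
    Nat.sInf_mem (⟨hfin32.choose.card, hfin32.choose, rfl, hfin32.choose_spec⟩ :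
      Set.Nonempty {n | ∃ T : Finset G, T.card = n ∧ D₃ ⊆ ⋃ g ∈ T, g • D₂})
  obtain ⟨B, hBcard, hBcov⟩ :
      ∃ B : Finset G, B.card = n ∧ D₂ ⊆ ⋃ g ∈ B, g • D₁ :=
    Nat.sInf_mem (⟨hfin21.choose.card, hfin21.choose, rfl, hfin21.choose_spec⟩ :
      Set.Nonempty {n | ∃ T : Finset G, T.card = n ∧ D₂ ⊆ ⋃ g ∈ T, g • D₁})
  have hD₂ne := h𝒟ne D₂ hD₂
  have hD₃ne := h𝒟ne D₃ hD₃
  -- positivity of the indices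
  have hm1 : 1 ≤ m := by
    rcases Nat.eq_zero_or_pos m with h0 | h; swap; · exact h
    rw [h0, Finset.card_eq_zero] at hAcard
    obtain ⟨x, hx⟩ := hD₃ne
    have := hAcov hx
    simp [hAcard] at this
  have hn1 : 1 ≤ n := by
    rcases Nat.eq_zero_or_pos n with h0 | h; swap; · exact h
    rw [h0, Finset.card_eq_zero] at hBcard
    obtain ⟨x, hx⟩ := hD₂ne
    have := hBcov hx
    simp [hBcard] at this
  -- upper bound : k ≤ m * n
  have hup : k ≤ m * n := by
    have hcov : D₃ ⊆ ⋃ g ∈ A * B, g • D₁ := by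
      intro x hx
      obtain ⟨_, ⟨a, rfl⟩, _, ⟨ha, rfl⟩, hxa⟩ := hAcov hx
      rw [Set.mem_smul_set_iff_inv_smul_mem] at hxa
      obtain ⟨_, ⟨b, rfl⟩, _, ⟨hb, rfl⟩, hxb⟩ := hBcov hxa
      rw [Set.mem_smul_set_iff_inv_smul_mem] at hxb
      refine Set.mem_biUnion (Finset.mul_mem_mul ha hb) ?_
      rw [Set.mem_smul_set_iff_inv_smul_mem, mul_inv_rev, mul_smul]
      exact hxb
    calc k ≤ (A * B).card := indexIn_le_card hcov
      _ ≤ A.card * B.card := Finset.card_mul_le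
      _ = m * n := by rw [hAcard, hBcard]
  -- lower bound : m * n ≤ k
  have hlow : m * n ≤ k := by
    set T' : Finset G := T.filter (fun g => (g • D₁ ∩ D₃).Nonempty) with hT'
    have hT'cov : D₃ ⊆ ⋃ g ∈ T', g • D₁ := by
      intro x hx
      obtain ⟨_, ⟨g, rfl⟩, _, ⟨hg, rfl⟩, hxg⟩ := hTcov hx
      exact Set.mem_biUnion (Finset.mem_filter.2 ⟨hg, ⟨x, hxg, hx⟩⟩) hxg
    have hT'card : T'.card ≤ k := hTcard ▸ Finset.card_filter_le _ _
    -- every translate g • D₂ for g ∈ T' meets D₃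
    have hmeet : ∀ g ∈ T', (g • D₂ ∩ D₃).Nonempty := by
      intro g hg
      obtain ⟨x, hx1, hx3⟩ := (Finset.mem_filter.1 hg).2
      exact ⟨x, Set.smul_set_mono h12 hx1, hx3⟩
    by_cases hcase : ∃ g ∈ T', D₃ ⊆ g • D₂
    · -- D₃ is inside a single translate of D₂ : then m = 1 and n ≤ k
      obtain ⟨g, hg, hsub⟩ := hcase
      have hmle : m ≤ 1 := by
        have hc : D₃ ⊆ ⋃ h ∈ ({g} : Finset G), h • D₂ := by simpa using hsub
        simpa using indexIn_le_card hc
      have hnk : n ≤ k := le_trans (indexIn_le_card fun x hx => hT'cov (h23 hx)) hT'card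
      calc m * n ≤ 1 * n := Nat.mul_le_mul_right n hmle
        _ = n := one_mul n
        _ ≤ k := hnk
    · push_neg at hcase
      -- every translate g • D₂, g ∈ T', is contained in D₃
      have hsubD₃ : ∀ g ∈ T', g • D₂ ⊆ D₃ := by
        intro g hg
        rcases hot (g • D₂) (h𝒟tr g D₂ hD₂) D₃ hD₃ with h | h | h
        · intro x hx
          exact (h.symm ▸ hx : x ∈ g • D₂ ∩ D₃).2
        · exact absurd (h ▸ Set.inter_subset_left : D₃ ⊆ g • D₂) (hcase g hg)
        · exact absurd h (hmeet g hg).ne_empty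
      -- the family of translates of D₂ coming from T'
      set F : Finset (Set G) := T'.image (fun g => g • D₂) with hF
      have hF𝒟 : ∀ E ∈ F, E ∈ 𝒟 := by
        intro E hE
        obtain ⟨g, hg, rfl⟩ := Finset.mem_image.1 hE
        exact h𝒟tr g D₂ hD₂
      have hFne : ∀ E ∈ F, E.Nonempty := fun E hE => h𝒟ne E (hF𝒟 E hE)
      -- distinct maximal members of F are disjoint
      have hdisj : ∀ E ∈ F, (∀ E' ∈ F, E ⊆ E' → E = E') →
          ∀ E₂ ∈ F, (∀ E' ∈ F, E₂ ⊆ E' → E₂ = E') → E ≠ E₂ → E ∩ E₂ = ∅ := by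
        intro E hE hEmax E₂ hE₂ hE₂max hne
        rcases hot E (hF𝒟 E hE) E₂ (hF𝒟 E₂ hE₂) with h | h | h
        · exact absurd (hEmax E₂ hE₂ (h ▸ Set.inter_subset_right)) hne
        · exact absurd (hE₂max E hE (h ▸ Set.inter_subset_left)).symm hne
        · exact h
      -- every member of F lies below a maximal member
      have key : ∀ g ∈ T', ∃ E, (E ∈ F ∧ g • D₂ ⊆ E) ∧ ∀ E' ∈ F, E ⊆ E' → E = E' := by
        intro g hg
        have hsfin : ({E | E ∈ F ∧ g • D₂ ⊆ E} : Set (Set G)).Finite :=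
          F.finite_toSet.subset fun E hE => hE.1
        have hsne : ({E | E ∈ F ∧ g • D₂ ⊆ E} : Set (Set G)).Nonempty :=
          ⟨g • D₂, Finset.mem_image_of_mem _ hg, subset_rfl⟩
        obtain ⟨E₀, hE₀, hE₀max⟩ := hsfin.exists_maximalFor id _ hsne
        exact ⟨E₀, hE₀, fun E' hE' hsub =>
          subset_antisymm hsub (hE₀max ⟨hE', hE₀.2.trans hsub⟩ hsub)⟩
      choose! φ hφ hφmax using key
      have hφF : ∀ g ∈ T', φ g ∈ F := fun g hg => (hφ g hg).1
      have hφsub : ∀ g ∈ T', g • D₂ ⊆ φ g := fun g hg => (hφ g hg).2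
      set M' : Finset (Set G) := T'.image φ with hM'
      have hM'prop : ∀ E ∈ M', E ∈ F ∧ ∀ E' ∈ F, E ⊆ E' → E = E' := by
        intro E hE
        obtain ⟨g, hg, rfl⟩ := Finset.mem_image.1 hE
        exact ⟨hφF g hg, hφmax g hg⟩
      -- m ≤ M'.card : translate representatives of M' cover D₃
      have hmM' : m ≤ M'.card := by
        have hrep : ∀ E ∈ M', ∃ c : G, c • D₂ = E := by
          intro E hE
          obtain ⟨c, hc, hceq⟩ := Finset.mem_image.1 (hM'prop E hE).1
          exact ⟨c, hceq⟩
        choose! rep hrepeq using hrep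
        have hcov : D₃ ⊆ ⋃ c ∈ M'.image rep, c • D₂ := by
          intro x hx
          obtain ⟨_, ⟨g, rfl⟩, _, ⟨hg, rfl⟩, hxg⟩ := hT'cov hx
          have hφgM : φ g ∈ M' := Finset.mem_image_of_mem φ hg
          refine Set.mem_biUnion (Finset.mem_image_of_mem rep hφgM) ?_
          rw [hrepeq (φ g) hφgM]
          exact hφsub g hg (Set.smul_set_mono h12 hxg)
        exact le_trans (indexIn_le_card hcov) Finset.card_image_le
      -- each fiber has at least n elements
      have hfiber : ∀ E ∈ M', n ≤ (T'.filter (fun g => φ g = E)).card := by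
        intro E hE
        obtain ⟨hEF, hEmax⟩ := hM'prop E hE
        obtain ⟨c, hc, hceq⟩ := Finset.mem_image.1 hEF
        have hcov : c • D₂ ⊆ ⋃ g ∈ T'.filter (fun g => φ g = E), g • D₁ := by
          intro x hx
          have hx₃ : x ∈ D₃ := hsubD₃ c hc hx
          obtain ⟨_, ⟨g, rfl⟩, _, ⟨hg, rfl⟩, hxg⟩ := hT'cov hx₃
          have hxφ : x ∈ φ g := hφsub g hg (Set.smul_set_mono h12 hxg)
          have hxE : x ∈ E := hceq ▸ hx
          have hφgE : φ g = E := by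
            by_contra hne
            have := hdisj (φ g) (hφF g hg) (hφmax g hg) E hEF hEmax hne
            exact absurd this (Set.nonempty_iff_ne_empty.1 ⟨x, hxφ, hxE⟩)
          exact Set.mem_biUnion (Finset.mem_filter.2 ⟨hg, hφgE⟩) hxg
        exact indexIn_le_card_of_smul_cover hcov
      -- count
      have hcount : T'.card = ∑ E ∈ M', (T'.filter (fun g => φ g = E)).card :=
        Finset.card_eq_sum_card_fiberwise fun g hg => Finset.mem_image_of_mem φ hg
      have hsum : M'.card * n ≤ ∑ E ∈ M', (T'.filter (fun g => φ g = E)).card := by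
        have := Finset.card_nsmul_le_sum M' (fun E => (T'.filter (fun g => φ g = E)).card) n
          hfiber
        simpa [smul_eq_mul] using this
      calc m * n ≤ M'.card * n := Nat.mul_le_mul_right n hmM'
        _ ≤ T'.card := hcount ▸ hsum
        _ ≤ k := hT'card
  omega
end

section
/- Let G be a group of ordered type with respect to 𝒟. If D ∈ 𝒟 is the union of finitely many pairwise disjoint sets D₁, …, D_n ∈ 𝒟, then at least one of the indices |D : D_r| (1 ≤ r ≤ n) is finite. -/
open Pointwise

/-- A total transitive relation on a finite nonempty type has a greatest element. -/
lemma exists_max_of_total_trans {α : Type*} [Fintype α] [Nonempty α]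
{R : α → α → Prop} (htot : ∀ a b, R a b ∨ R b a) (htrans : Transitive R) :
    ∃ m, ∀ a, R a m := by
  classical
  have key : ∀ s : Finset α, s.Nonempty → ∃ m ∈ s, ∀ a ∈ s, R a m := by
    intro s
    induction s using Finset.induction with
    | empty => intro h; exact absurd rfl h.ne_empty
    | @insert a s ha ih =>
      intro _
      rcases s.eq_empty_or_nonempty with hs | hs
      · subst hs
        exact ⟨a, Finset.mem_insert_self _ _, by
          intro b hb
          rcases Finset.mem_insert.1 hb with rfl | hb
          · exact (htot b b).elim id id
          · exact absurd hb (Finset.notMem_empty _)⟩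
      · obtain ⟨m, hm, hmax⟩ := ih hs
        rcases htot a m with h | h
        · refine ⟨m, Finset.mem_insert_of_mem hm, ?_⟩
          intro b hb
          rcases Finset.mem_insert.1 hb with rfl | hb
          · exact h
          · exact hmax b hb
        · refine ⟨a, Finset.mem_insert_self _ _, ?_⟩
          intro b hb
          rcases Finset.mem_insert.1 hb with rfl | hb
          · exact (htot b b).elim id id
          · exact htrans (hmax b hb) h
  obtain ⟨m, _, hm⟩ := key Finset.univ ⟨Classical.arbitrary α, Finset.mem_univ _⟩
  exact ⟨m, fun a => hm a (Finset.mem_univ a)⟩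

/-- If `G` is of ordered type and `D ∈ 𝒟` is a finite disjoint union of members
`D₁, …, D_n` of `𝒟`, then at least one index `|D : D_r|` is finite. -/
theorem exists_finite_index_of_disjoint_union
    {G : Type*} [Group G]
    (𝒟 : Set (Set G))
    (h𝒟ne : ∀ D ∈ 𝒟, (D : Set G).Nonempty)
    (h𝒟tr : ∀ (g : G), ∀ D ∈ 𝒟, g • D ∈ 𝒟)
    (hot : IsOrderedType 𝒟)
    {D : Set G} (hD : D ∈ 𝒟)
    {n : ℕ} (Dr : Fin n → Set G) (hDr : ∀ r, Dr r ∈ 𝒟)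
    (hdisj : Pairwise (Function.onFun Disjoint Dr))
    (hunion : D = ⋃ r, Dr r) :
    ∃ r, HasFinIndexIn (Dr r) D := by
  classical
  -- the index type is nonempty since D is nonempty
  obtain ⟨d, hd⟩ := h𝒟ne D hD
  rw [hunion] at hd
  obtain ⟨r₀, hr₀⟩ := Set.mem_iUnion.1 hd
  haveI : Nonempty (Fin n) := ⟨r₀⟩
  -- choose a point in each Dr r
  choose x hx using fun r => h𝒟ne (Dr r) (hDr r)
  -- the domination relation
  set R : Fin n → Fin n → Prop := fun r s => ∃ g : G, Dr r ⊆ g • Dr s with hR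
  have htot : ∀ r s, R r s ∨ R s r := by
    intro r s
    set g : G := x s * (x r)⁻¹
    have hmem : x s ∈ g • Dr r := by
      have : g • x r ∈ g • Dr r := Set.smul_mem_smul_set (hx r)
      simpa [g, smul_eq_mul, mul_assoc] using this
    have hg : g • Dr r ∈ 𝒟 := h𝒟tr g _ (hDr r)
    rcases hot _ hg _ (hDr s) with h | h | h
    · -- g • Dr r ⊆ Dr s
      left
      refine ⟨g⁻¹, ?_⟩
      have hsub : g • Dr r ⊆ Dr s := by rw [← h]; exact Set.inter_subset_right
      have := Set.smul_set_mono (a := g⁻¹) hsub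
      simpa [smul_smul] using this
    · -- Dr s ⊆ g • Dr r
      right
      exact ⟨g, by rw [← h]; exact Set.inter_subset_left⟩
    · exact absurd h (by
        intro hemp
        have : x s ∈ (∅ : Set G) := hemp ▸ ⟨hmem, hx s⟩
        exact this.elim)
  have htrans : Transitive R := by
    intro r s t ⟨g, hg⟩ ⟨h, hh⟩
    refine ⟨g * h, ?_⟩
    intro y hy
    have := Set.smul_set_mono (a := g) hh (hg hy)
    simpa [smul_smul] using this
  obtain ⟨m, hm⟩ := exists_max_of_total_trans htot htrans
  choose gg hgg using hm
  refine ⟨m, (Finset.univ.image gg), ?_⟩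
  intro y hy
  rw [hunion] at hy
  obtain ⟨r, hr⟩ := Set.mem_iUnion.1 hy
  refine Set.mem_biUnion (Finset.mem_image_of_mem gg (Finset.mem_univ r)) (hgg r hr)
end

section
/- Let φ : G → Q be a group homomorphism with kernel N, and let A ⊆ B be subgroups of G. Then the left coset space B/A is in bijection with the product ((N ∩ B)/(N ∩ A)) × (φ(B)/φ(A)) of left coset spaces; in particular, as cardinals, the index [B : A] equals [N ∩ B : N ∩ A] · [φ(B) : φ(A)], and [B : A] is finite if and only if both [N ∩ B : N ∩ A] and [φ(B) : φ(A)] are finite. -/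
universe u

open Subgroup
open scoped Pointwise

/-- Coset spaces along a group isomorphism with corresponding subgroups. -/
def quotCongrAux {Γ Δ : Type*} [Group Γ] [Group Δ] (e : Γ ≃* Δ) (S : Subgroup Γ)
    (T : Subgroup Δ) (h : ∀ x, x ∈ S ↔ e x ∈ T) : (Γ ⧸ S) ≃ (Δ ⧸ T) :=
  Quotient.congr e.toEquiv (fun a b => by
    rw [QuotientGroup.leftRel_apply, QuotientGroup.leftRel_apply]
    simpa using h (a⁻¹ * b))

/-- Coset space of a comap along a surjection. -/
noncomputable def quotComapEquivAux {Γ Δ : Type*} [Group Γ] [Group Δ] (f : Γ →* Δ)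
    (hf : Function.Surjective f) (T : Subgroup Δ) : (Γ ⧸ T.comap f) ≃ (Δ ⧸ T) := by
  refine Equiv.ofBijective (Quotient.map' f (fun a b hab => ?_)) ⟨?_, ?_⟩
  · rw [QuotientGroup.leftRel_apply] at *
    simpa [Subgroup.mem_comap] using hab
  · intro a b
    induction a using Quotient.inductionOn'
    induction b using Quotient.inductionOn'
    simp only [Quotient.map'_mk'']
    intro hab
    rw [Quotient.eq''] at *
    rw [QuotientGroup.leftRel_apply] at *
    simpa [Subgroup.mem_comap] using hab
  · intro q
    induction q using Quotient.inductionOn'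
    next d =>
    obtain ⟨c, rfl⟩ := hf d
    exact ⟨Quotient.mk'' c, rfl⟩

/-- Coset-space second isomorphism with normal subgroup on the left. -/
noncomputable def quotNormalSwapAux {Γ : Type*} [Group Γ] (H N : Subgroup Γ) [N.Normal] :
    (↥N ⧸ (H ⊓ N).subgroupOf N) ≃ (↥(H ⊔ N) ⧸ H.subgroupOf (H ⊔ N)) := by
  refine Equiv.ofBijective (Quotient.map' (Subgroup.inclusion le_sup_right) (fun a b hab => ?_))
    ⟨?_, ?_⟩
  · rw [QuotientGroup.leftRel_apply] at *
    simp only [Subgroup.mem_subgroupOf, Subgroup.coe_mul, Subgroup.coe_inv,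
      Subgroup.coe_inclusion, Subgroup.mem_inf] at hab ⊢
    exact hab.1
  · intro a b
    induction a using Quotient.inductionOn'
    induction b using Quotient.inductionOn'
    next a b =>
    simp only [Quotient.map'_mk'']
    intro hab
    rw [Quotient.eq''] at *
    rw [QuotientGroup.leftRel_apply] at *
    simp only [Subgroup.mem_subgroupOf, Subgroup.coe_mul, Subgroup.coe_inv,
      Subgroup.coe_inclusion, Subgroup.mem_inf] at hab ⊢
    exact ⟨hab, mul_mem (inv_mem a.2) b.2⟩
  · intro q
    induction q using Quotient.inductionOn'
    next x =>
    have hx : (x : Γ) ∈ (N : Set Γ) * (H : Set Γ) := by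
      rw [← Subgroup.normal_mul N H]
      exact (sup_comm H N ▸ x.2 : (x : Γ) ∈ N ⊔ H)
    obtain ⟨n, hn, h, hh, hnh⟩ := hx
    refine ⟨Quotient.mk'' ⟨n, hn⟩, ?_⟩
    simp only [Quotient.map'_mk'']
    rw [Quotient.eq'', QuotientGroup.leftRel_apply]
    simp only [Subgroup.mem_subgroupOf, Subgroup.coe_mul, Subgroup.coe_inv,
      Subgroup.coe_inclusion]
    show n⁻¹ * (x : Γ) ∈ H
    rw [← hnh]
    simpa using hh

/-- Index identity behind Lemma 5.4: for a homomorphism `φ : G → Q` with kernel `N` and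
subgroups `A ≤ B` of `G`, the coset space `B/A` is in bijection with
`((N ∩ B)/(N ∩ A)) × (φ(B)/φ(A))`; in particular the cardinal identity
`[B : A] = [N ∩ B : N ∩ A] ⬝ [φ(B) : φ(A)]` holds and `[B : A]` is finite iff both
factors are. -/
theorem coset_space_equiv_ker_prod_image
    {G Q : Type u} [Group G] [Group Q] (φ : G →* Q)
    (A B : Subgroup G) (hAB : A ≤ B) :
    Nonempty ((B ⧸ A.subgroupOf B) ≃
      ((↥(φ.ker ⊓ B) ⧸ (φ.ker ⊓ A).subgroupOf (φ.ker ⊓ B)) ×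
        (↥(B.map φ) ⧸ (A.map φ).subgroupOf (B.map φ)))) ∧
    Cardinal.mk (B ⧸ A.subgroupOf B) =
      Cardinal.mk (↥(φ.ker ⊓ B) ⧸ (φ.ker ⊓ A).subgroupOf (φ.ker ⊓ B)) *
        Cardinal.mk (↥(B.map φ) ⧸ (A.map φ).subgroupOf (B.map φ)) ∧
    (Finite (B ⧸ A.subgroupOf B) ↔
      (Finite (↥(φ.ker ⊓ B) ⧸ (φ.ker ⊓ A).subgroupOf (φ.ker ⊓ B)) ∧
        Finite (↥(B.map φ) ⧸ (A.map φ).subgroupOf (B.map φ)))) := by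
  set s : Subgroup ↥B := A.subgroupOf B with hs
  set M : Subgroup ↥B := φ.ker.subgroupOf B with hMdef
  have e1 : (↥B ⧸ s) ≃ (↥B ⧸ (s ⊔ M)) × ((↥(s ⊔ M)) ⧸ s.subgroupOf (s ⊔ M)) :=
    Subgroup.quotientEquivProdOfLE le_sup_left
  -- the kernel piece
  let eM : ↥M ≃* ↥(φ.ker ⊓ B) :=
    { toFun := fun x => ⟨((x : ↥B) : G), ⟨Subgroup.mem_subgroupOf.mp x.2, (x : ↥B).2⟩⟩
      invFun := fun y => ⟨⟨(y : G), y.2.2⟩, Subgroup.mem_subgroupOf.mpr y.2.1⟩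
      left_inv := fun x => rfl
      right_inv := fun y => rfl
      map_mul' := fun x y => rfl }
  have eX : ((↥(s ⊔ M)) ⧸ s.subgroupOf (s ⊔ M)) ≃
      (↥(φ.ker ⊓ B) ⧸ (φ.ker ⊓ A).subgroupOf (φ.ker ⊓ B)) := by
    refine (quotNormalSwapAux s M).symm.trans
      (quotCongrAux eM ((s ⊓ M).subgroupOf M) ((φ.ker ⊓ A).subgroupOf (φ.ker ⊓ B)) ?_)
    intro x
    simp only [Subgroup.mem_subgroupOf, Subgroup.mem_inf, hs, hMdef]
    exact ⟨fun h => ⟨h.2, h.1⟩, fun h => ⟨h.2, h.1⟩⟩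
  -- the image piece
  have hmem : ∀ b : ↥B, φ (b : G) ∈ B.map φ := fun b => ⟨(b : G), b.2, rfl⟩
  set f : ↥B →* ↥(B.map φ) := (φ.comp B.subtype).codRestrict (B.map φ) hmem with hf
  have hfsurj : Function.Surjective f := by
    rintro ⟨q, hq⟩
    obtain ⟨b, hb, rfl⟩ := hq
    exact ⟨⟨b, hb⟩, rfl⟩
  have hcom : ((A.map φ).subgroupOf (B.map φ)).comap f = s ⊔ M := by
    apply le_antisymm
    · intro x hx
      have hx' : φ (x : G) ∈ A.map φ := by
        have := Subgroup.mem_subgroupOf.mp (Subgroup.mem_comap.mp hx); exact this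
      obtain ⟨a, ha, hax⟩ := hx'
      have haB : a ∈ B := hAB ha
      have hk : a⁻¹ * (x : G) ∈ φ.ker := by
        simp [MonoidHom.mem_ker, map_mul, hax]
      have hxdec : x = (⟨a, haB⟩ : ↥B) * ⟨a⁻¹ * (x : G), mul_mem (inv_mem haB) x.2⟩ := by
        ext
        simp
      rw [hxdec]
      exact mul_mem (Subgroup.mem_sup_left (Subgroup.mem_subgroupOf.mpr ha))
        (Subgroup.mem_sup_right (Subgroup.mem_subgroupOf.mpr hk))
    · apply sup_le
      · intro x hx
        have hxA : (x : G) ∈ A := Subgroup.mem_subgroupOf.mp hx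
        exact Subgroup.mem_subgroupOf.mpr (Subgroup.mem_map.mpr ⟨(x : G), hxA, rfl⟩)
      · intro x hx
        have hxk : φ (x : G) = 1 := Subgroup.mem_subgroupOf.mp hx
        refine Subgroup.mem_subgroupOf.mpr (Subgroup.mem_map.mpr ⟨1, one_mem A, ?_⟩)
        have hfx : ((f x : ↥(B.map φ)) : Q) = φ (x : G) := rfl
        rw [hfx, hxk, map_one]
  have eY : (↥B ⧸ (s ⊔ M)) ≃ (↥(B.map φ) ⧸ (A.map φ).subgroupOf (B.map φ)) :=
    (Subgroup.quotientEquivOfEq hcom.symm).trans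
      (quotComapEquivAux f hfsurj ((A.map φ).subgroupOf (B.map φ)))
  have e : (↥B ⧸ s) ≃
      ((↥(φ.ker ⊓ B) ⧸ (φ.ker ⊓ A).subgroupOf (φ.ker ⊓ B)) ×
        (↥(B.map φ) ⧸ (A.map φ).subgroupOf (B.map φ))) :=
    e1.trans ((Equiv.prodCongr eY eX).trans (Equiv.prodComm _ _))
  refine ⟨⟨e⟩, ?_, ?_⟩
  · rw [Cardinal.mk_congr e, Cardinal.mk_prod]
    simp
  · constructor
    · intro h
      have h' : Finite _ := e.finite_iff.mp h
      exact ⟨@Finite.prod_left _ _ h' _, @Finite.prod_right _ _ h' _⟩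
    · rintro ⟨h1, h2⟩
      exact e.finite_iff.mpr (by infer_instance)
end
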